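/- arXiv:math/0103118 — 2 statements merged into one kernel-verified Lean document; each statement's English description precedes it below -/
import Mathlib

section
/- For the European call payoff under a lognormal model, the Black-Scholes call price satisfies c(S₀,K,r,T,σ) = S₀·Φ(d) − K·e^{−rT}·Φ(d − σ√T), where d = (ln(S₀/K) + T(r + σ²/2))/(σ√T) and Φ is the standard normal CDF. That is, if Z is a standard normal random variable and S_T = S₀·exp(rT − σ²T/2 + σ√T·Z), then e^{−rT}·E[(S_T − K)⁺] equals the right-hand side. -/
open MeasureTheory ProbabilityTheory Real Set

/-- Standard normal CDF. -/
noncomputable def Phi (x : ℝ) : ℝ :=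
  ∫ y in Set.Iic x, (Real.sqrt (2 * Real.pi))⁻¹ * Real.exp (-(y ^ 2) / 2)

/-- Standard normal density. -/
noncomputable def phi (y : ℝ) : ℝ := (Real.sqrt (2 * Real.pi))⁻¹ * Real.exp (-(y ^ 2) / 2)

/-- Black-Scholes d value. -/
noncomputable def dBS (S₀ K r T σ : ℝ) : ℝ :=
  (Real.log (S₀ / K) + T * (r + σ ^ 2 / 2)) / (σ * Real.sqrt T)

/-- Black-Scholes call price (closed form). -/
noncomputable def callBS (S₀ K r T σ : ℝ) : ℝ :=
  S₀ * Phi (dBS S₀ K r T σ) - K * Real.exp (-(r * T)) * Phi (dBS S₀ K r T σ - σ * Real.sqrt T)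

/-- Black-Scholes put price (via put-call parity). -/
noncomputable def putBS (S₀ K r T σ : ℝ) : ℝ :=
  callBS S₀ K r T σ - S₀ + K * Real.exp (-(r * T))

open scoped NNReal in
private lemma _nnopen : True := trivial

open scoped NNReal

lemma phi_integrable : Integrable phi := by
  have h : Integrable (fun x : ℝ => Real.exp (-(1/2 : ℝ) * x ^ 2)) :=
    integrable_exp_neg_mul_sq (by norm_num)
  have h2 := h.const_mul (Real.sqrt (2 * Real.pi))⁻¹
  have : phi = fun x : ℝ => (Real.sqrt (2 * Real.pi))⁻¹ * Real.exp (-(1/2 : ℝ) * x ^ 2) := by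
    funext x; simp only [phi]; congr 1; ring
  rw [this]; exact h2

lemma phi_shift (b a : ℝ) : ∫ z in Ioi b, phi (z - a) = ∫ z in Ioi (b - a), phi z := by
  rw [← integral_indicator measurableSet_Ioi, ← integral_indicator measurableSet_Ioi]
  have h : ∀ z : ℝ, (Ioi b).indicator (fun z => phi (z - a)) z
      = (Ioi (b - a)).indicator phi (z - a) := by
    intro z
    by_cases hz : z ∈ Ioi b
    · rw [indicator_of_mem hz, indicator_of_mem]
      simp only [mem_Ioi] at hz ⊢; linarith
    · rw [indicator_of_notMem hz, indicator_of_notMem]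
      simp only [mem_Ioi, not_lt] at hz ⊢; linarith
  simp_rw [h]
  exact integral_sub_right_eq_self ((Ioi (b - a)).indicator phi) a

lemma Phi_eq_Ioi (d : ℝ) : ∫ z in Ioi (-d), phi z = Phi d := by
  have h : Phi d = ∫ x in Iic d, phi (-x) := by
    unfold Phi phi
    congr 1; funext x; rw [neg_sq]
  rw [h, integral_comp_neg_Iic]

theorem stmt0 (S₀ K σ T r : ℝ) (hS : 0 < S₀) (hK : 0 < K) (hσ : 0 < σ) (hT : 0 < T)
    (hr : 0 ≤ r) :
    Real.exp (-(r * T)) *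
        ∫ z, max (S₀ * Real.exp (r * T - σ ^ 2 * T / 2 + σ * Real.sqrt T * z) - K) 0
          ∂(gaussianReal 0 1) =
      S₀ * Phi (dBS S₀ K r T σ) -
        K * Real.exp (-(r * T)) * Phi (dBS S₀ K r T σ - σ * Real.sqrt T) := by
  set a : ℝ := σ * Real.sqrt T with ha_def
  have hst : Real.sqrt T > 0 := Real.sqrt_pos.2 hT
  have ha : 0 < a := mul_pos hσ hst
  have ha2 : a ^ 2 = σ ^ 2 * T := by
    rw [ha_def, mul_pow, Real.sq_sqrt hT.le]
  set c : ℝ := r * T - σ ^ 2 * T / 2 with hc_def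
  set b : ℝ := (Real.log (K / S₀) - c) / a with hb_def
  -- relation between b and dBS
  have hd : dBS S₀ K r T σ = a - b := by
    rw [dBS, hb_def, Real.log_div hS.ne' hK.ne', Real.log_div hK.ne' hS.ne', hc_def]
    field_simp
    linear_combination (-(2*σ^3*Real.sqrt T)) * Real.sq_sqrt hT.le
  -- convert to Lebesgue integral
  have hμ : gaussianReal 0 1
      = volume.withDensity (fun x => ((gaussianPDFReal 0 1 x).toNNReal : ENNReal)) := by
    rw [gaussianReal_of_var_ne_zero 0 one_ne_zero]; rfl
  have hmeas : Measurable fun x => (gaussianPDFReal 0 1 x).toNNReal :=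
    (measurable_gaussianPDFReal 0 1).real_toNNReal
  rw [hμ, integral_withDensity_eq_integral_smul hmeas]
  have hpdf : ∀ x : ℝ, gaussianPDFReal 0 1 x = phi x := by
    intro x
    simp [gaussianPDFReal, phi]
  -- pointwise: smul = indicator
  have hge : ∀ z : ℝ, b < z ↔ K < S₀ * Real.exp (c + a * z) := by
    intro z
    rw [hb_def, div_lt_iff₀ ha]
    constructor
    · intro h
      have : Real.log (K / S₀) < c + a * z := by linarith [mul_comm a z]
      have h2 := Real.exp_lt_exp.2 this
      rw [Real.exp_log (div_pos hK hS)] at h2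
      calc K = S₀ * (K / S₀) := by field_simp
        _ < S₀ * Real.exp (c + a * z) := by
            exact mul_lt_mul_of_pos_left h2 hS
    · intro h
      have h2 : K / S₀ < Real.exp (c + a * z) := by
        rw [div_lt_iff₀ hS]; linarith [mul_comm (Real.exp (c + a * z)) S₀]
      have h3 : Real.log (K / S₀) < c + a * z := by
        rw [← Real.exp_log (div_pos hK hS)] at h2
        exact Real.exp_lt_exp.1 h2
      linarith [mul_comm a z, h3]
  have hkey : ∀ z : ℝ,
      ((gaussianPDFReal 0 1 z).toNNReal : ℝ≥0) • max (S₀ * Real.exp (c + a * z) - K) 0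
        = (Ioi b).indicator
            (fun z => S₀ * Real.exp (r * T) * phi (z - a) - K * phi z) z := by
    intro z
    have hsm : ((gaussianPDFReal 0 1 z).toNNReal : ℝ≥0) • max (S₀ * Real.exp (c + a * z) - K) 0
        = phi z * max (S₀ * Real.exp (c + a * z) - K) 0 := by
      rw [NNReal.smul_def, smul_eq_mul, Real.coe_toNNReal _ (gaussianPDFReal_nonneg 0 1 z), hpdf]
    rw [hsm]
    have hexp : Real.exp (c + a * z) * phi z = Real.exp (r * T) * phi (z - a) := by
      have e1 : c + a * z + -(z ^ 2) / 2 = r * T + -((z - a) ^ 2) / 2 := by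
        rw [hc_def]; linear_combination ha2 / 2
      have hmul : ∀ x y : ℝ,
          Real.exp x * ((Real.sqrt (2 * Real.pi))⁻¹ * Real.exp y)
            = (Real.sqrt (2 * Real.pi))⁻¹ * Real.exp (x + y) := by
        intro x y; rw [Real.exp_add, mul_left_comm]
      simp only [phi]
      rw [hmul, hmul, e1]
    by_cases hz : z ∈ Ioi b
    · rw [indicator_of_mem hz]
      have hpos : 0 < S₀ * Real.exp (c + a * z) - K := by
        have := (hge z).1 hz; linarith
      rw [max_eq_left hpos.le]
      have : phi z * (S₀ * Real.exp (c + a * z) - K)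
          = S₀ * (Real.exp (c + a * z) * phi z) - K * phi z := by ring
      rw [this, hexp]; ring
    · rw [indicator_of_notMem hz]
      have hle : S₀ * Real.exp (c + a * z) - K ≤ 0 := by
        simp only [mem_Ioi, not_lt] at hz
        by_contra hcon
        push_neg at hcon
        have : b < z := (hge z).2 (by linarith)
        linarith
      rw [max_eq_right hle, mul_zero]
  simp_rw [hkey]
  rw [integral_indicator measurableSet_Ioi]
  have hint1 : IntegrableOn (fun z => S₀ * Real.exp (r * T) * phi (z - a)) (Ioi b) :=
    (((phi_integrable).comp_sub_right a).const_mul _).integrableOn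
  have hint2 : IntegrableOn (fun z => K * phi z) (Ioi b) :=
    ((phi_integrable).const_mul K).integrableOn
  rw [integral_sub hint1 hint2, integral_const_mul, integral_const_mul, phi_shift]
  have hb1 : b - a = -(dBS S₀ K r T σ) := by rw [hd]; ring
  have hb2 : b = -(dBS S₀ K r T σ - a) := by rw [hd]; ring
  rw [hb1, hb2, Phi_eq_Ioi, Phi_eq_Ioi]
  rw [mul_sub]
  have hone : Real.exp (-(r * T)) * Real.exp (r * T) = 1 := by
    rw [← Real.exp_add]; simp
  linear_combination (S₀ * Phi (dBS S₀ K r T σ)) * hone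
end

section
/- The function x ↦ E[(K − x·L)⁺], where L = exp(−σ²T/2 + σ√T·Z) with Z standard normal, is strictly convex on (0,∞), for any K > 0. -/
open MeasureTheory ProbabilityTheory Real Set

set_option maxHeartbeats 1000000 in
theorem stmt5 (K σ T : ℝ) (hK : 0 < K) (hσ : 0 < σ) (hT : 0 < T) :
    StrictConvexOn ℝ (Set.Ioi (0 : ℝ))
      (fun x : ℝ =>
        ∫ z, max (K - x * Real.exp (-(σ ^ 2 * T) / 2 + σ * Real.sqrt T * z)) 0
          ∂(gaussianReal 0 1)) := by
  set c : ℝ := σ * Real.sqrt T with hc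
  have hcpos : 0 < c := mul_pos hσ (Real.sqrt_pos.mpr hT)
  set m : ℝ → ℝ := fun z => Real.exp (-(σ ^ 2 * T) / 2 + c * z) with hm
  have hmpos : ∀ z, 0 < m z := fun z => Real.exp_pos _
  set ν := gaussianReal 0 1 with hν
  -- integrability of the integrand for every x ≥ 0
  have hint : ∀ x : ℝ, 0 ≤ x → Integrable (fun z => max (K - x * m z) 0) ν := by
    intro x hx
    refine Integrable.mono' (integrable_const K) ?_ ?_
    · exact (Continuous.max (by fun_prop) continuous_const).aestronglyMeasurable
    · filter_upwards with z
      rw [Real.norm_eq_abs, abs_of_nonneg (le_max_right _ _)]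
      have := mul_nonneg hx (hmpos z).le
      simp only [max_le_iff]
      constructor <;> nlinarith
  -- key lemma for ordered pair x < y
  have key : ∀ x y a b : ℝ, x ∈ Set.Ioi (0:ℝ) → y ∈ Set.Ioi (0:ℝ) → x < y →
      0 < a → 0 < b → a + b = 1 →
      (∫ z, max (K - (a • x + b • y) * m z) 0 ∂ν) <
        a • (∫ z, max (K - x * m z) 0 ∂ν) + b • (∫ z, max (K - y * m z) 0 ∂ν) := by
    intro x y a b hx hy hxy ha hb hab
    simp only [Set.mem_Ioi] at hx hy
    simp only [smul_eq_mul]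
    have hxyab : 0 < a * x + b * y := by positivity
    have hI1 := hint x hx.le
    have hI2 := hint y hy.le
    have hI3 := hint (a * x + b * y) hxyab.le
    -- pointwise convexity
    have hpt : ∀ z, max (K - (a * x + b * y) * m z) 0 ≤
        a * max (K - x * m z) 0 + b * max (K - y * m z) 0 := by
      intro z
      have h1 : K - x * m z ≤ max (K - x * m z) 0 := le_max_left _ _
      have h2 : K - y * m z ≤ max (K - y * m z) 0 := le_max_left _ _
      have h3 : (0:ℝ) ≤ max (K - x * m z) 0 := le_max_right _ _
      have h4 : (0:ℝ) ≤ max (K - y * m z) 0 := le_max_right _ _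
      rw [max_le_iff]
      constructor <;> nlinarith
    -- the set where strict inequality holds
    set l : ℝ := (Real.log (K / y) + σ ^ 2 * T / 2) / c with hl
    set u : ℝ := (Real.log (K / x) + σ ^ 2 * T / 2) / c with hu
    have hlu : l < u := by
      have : Real.log (K / y) < Real.log (K / x) := by
        apply Real.log_lt_log (by positivity)
        exact div_lt_div_of_pos_left hK hx hxy
      exact div_lt_div_of_pos_right (by linarith) hcpos
    have hstrict : ∀ z ∈ Set.Ioo l u,
        max (K - (a * x + b * y) * m z) 0 <
          a * max (K - x * m z) 0 + b * max (K - y * m z) 0 := by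
      intro z hz
      obtain ⟨hz1, hz2⟩ := hz
      have hcz1 : Real.log (K / y) < -(σ ^ 2 * T) / 2 + c * z := by
        have := (div_lt_iff₀ hcpos).mp hz1
        linarith
      have hcz2 : -(σ ^ 2 * T) / 2 + c * z < Real.log (K / x) := by
        have := (lt_div_iff₀ hcpos).mp hz2
        linarith
      have hmx : m z < K / x := by
        rw [hm]
        calc Real.exp (-(σ ^ 2 * T) / 2 + c * z) < Real.exp (Real.log (K / x)) :=
              Real.exp_lt_exp.mpr hcz2
          _ = K / x := Real.exp_log (by positivity)
      have hmy : K / y < m z := by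
        rw [hm]
        calc K / y = Real.exp (Real.log (K / y)) := (Real.exp_log (by positivity)).symm
          _ < Real.exp (-(σ ^ 2 * T) / 2 + c * z) := Real.exp_lt_exp.mpr hcz1
      have h1 : 0 < K - x * m z := by
        have := (lt_div_iff₀ hx).mp hmx; nlinarith
      have h2 : K - y * m z < 0 := by
        have := (div_lt_iff₀ hy).mp hmy; nlinarith
      rw [max_eq_left h1.le, max_eq_right h2.le]
      have hRHS : 0 < a * (K - x * m z) + b * 0 := by nlinarith
      rw [max_lt_iff]
      constructor <;> nlinarith
    -- measure of the interval is positive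
    have hνpos : 0 < ν (Set.Ioo l u) := by
      rcases eq_or_lt_of_le (show (0:ENNReal) ≤ ν (Set.Ioo l u) from zero_le) with h | h
      · exfalso
        have habs : volume ≪ ν := gaussianReal_absolutelyContinuous' 0 (by norm_num)
        have : volume (Set.Ioo l u) = 0 := habs h.symm
        rw [Real.volume_Ioo] at this
        have : u - l ≤ 0 := by
          by_contra hcon
          push_neg at hcon
          simp [ENNReal.ofReal_eq_zero] at this
          linarith
        linarith
      · exact h
    -- combine: integral of the nonneg difference is positive
    set g : ℝ → ℝ := fun z => a * max (K - x * m z) 0 + b * max (K - y * m z) 0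
        - max (K - (a * x + b * y) * m z) 0 with hg
    have hIg : Integrable g ν := ((hI1.const_mul a).add (hI2.const_mul b)).sub hI3
    have hgnn : ∀ z, 0 ≤ g z := fun z => by simp only [hg]; linarith [hpt z]
    have hgpos : 0 < ∫ z, g z ∂ν := by
      rw [integral_pos_iff_support_of_nonneg (fun z => hgnn z) hIg]
      refine lt_of_lt_of_le hνpos (measure_mono ?_)
      intro z hz
      simp only [Function.mem_support, hg]
      have := hstrict z hz
      intro hzero
      linarith
    have hIa : Integrable (fun z => a * max (K - x * m z) 0) ν := hI1.const_mul a
    have hIb : Integrable (fun z => b * max (K - y * m z) 0) ν := hI2.const_mul b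
    have hIab : Integrable (fun z => a * max (K - x * m z) 0 + b * max (K - y * m z) 0) ν :=
      hIa.add hIb
    simp only [hg] at hgpos
    rw [integral_sub hIab hI3, integral_add hIa hIb,
      integral_const_mul, integral_const_mul] at hgpos
    linarith
  constructor
  · exact convex_Ioi 0
  · intro x hx y hy hxy a b ha hb hab
    rcases lt_or_gt_of_ne hxy with h | h
    · exact key x y a b hx hy h ha hb hab
    · have := key y x b a hy hx h hb ha (by linarith)
      calc (fun x : ℝ => ∫ z, max (K - x * m z) 0 ∂ν) (a • x + b • y)
          = (∫ z, max (K - (b • y + a • x) * m z) 0 ∂ν) := by rw [add_comm]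
        _ < b • (∫ z, max (K - y * m z) 0 ∂ν) + a • (∫ z, max (K - x * m z) 0 ∂ν) := this
        _ = _ := by ring
end
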